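/- A priori gradient bound: if v_λ solves Δv = λ e^{v₀+v}(e^{v₀+v}-1) + 4πN/|V| with v₀ + v_λ < 0, and v_λ = v̄_λ + v'_λ with v̄_λ = (1/|V|)∫_V v_λ dμ, then ‖∇v'_λ‖₂ ≤ Cλ for a constant C depending only on G. -/

import Mathlib

open Finset Real

lemma edgeD {V : Type} [Fintype V] (w : V → V → ℝ) (hnonneg : ∀ x y, 0 ≤ w x y)
    (b c : V) (f : V → ℝ) :
    w b c * (f c - f b) ^ 2 ≤ ∑ a, ∑ b, w a b * (f b - f a) ^ 2 := by
  have h1 : w b c * (f c - f b) ^ 2 ≤ ∑ y, w b y * (f y - f b) ^ 2 := by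
    apply Finset.single_le_sum (f := fun y => w b y * (f y - f b) ^ 2)
    · intro i _; exact mul_nonneg (hnonneg b i) (sq_nonneg _)
    · exact Finset.mem_univ c
  refine h1.trans ?_
  apply Finset.single_le_sum (f := fun a => ∑ y, w a y * (f y - f a) ^ 2)
  · intro i _; exact Finset.sum_nonneg fun j _ => mul_nonneg (hnonneg i j) (sq_nonneg _)
  · exact Finset.mem_univ b

lemma pairK {V : Type} [Fintype V] (w : V → V → ℝ) (hnonneg : ∀ x y, 0 ≤ w x y)
    {x y : V} (h : Relation.ReflTransGen (fun a b => 0 < w a b) x y) :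
    ∃ K : ℝ, 0 ≤ K ∧ ∀ f : V → ℝ,
      |f y - f x| ≤ K * Real.sqrt (∑ a, ∑ b, w a b * (f b - f a) ^ 2) := by
  induction h with
  | refl => exact ⟨0, le_refl 0, fun f => by simp⟩
  | @tail b c hxb hbc ih =>
    obtain ⟨K, hK0, hK⟩ := ih
    refine ⟨K + Real.sqrt (w b c)⁻¹, by positivity, fun f => ?_⟩
    set D := ∑ a, ∑ b, w a b * (f b - f a) ^ 2 with hD
    have hDnn : 0 ≤ D := by
      exact Finset.sum_nonneg fun a _ => Finset.sum_nonneg fun b _ =>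
        mul_nonneg (hnonneg a b) (sq_nonneg _)
    have hedge : |f c - f b| ≤ Real.sqrt (w b c)⁻¹ * Real.sqrt D := by
      rw [← Real.sqrt_mul (by positivity)]
      rw [← Real.sqrt_sq_eq_abs]
      apply Real.sqrt_le_sqrt
      rw [inv_mul_eq_div, le_div_iff₀ hbc, mul_comm]
      exact edgeD w hnonneg b c f
    calc |f c - f x| ≤ |f b - f x| + |f c - f b| := by
            have h2 : f c - f x = (f b - f x) + (f c - f b) := by ring
            rw [h2]; exact abs_add_le _ _
      _ ≤ K * Real.sqrt D + Real.sqrt (w b c)⁻¹ * Real.sqrt D :=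
            add_le_add (hK f) hedge
      _ = (K + Real.sqrt (w b c)⁻¹) * Real.sqrt D := by ring

theorem stmt_17 {V : Type} [Fintype V] (w : V → V → ℝ) (mu : V → ℝ)
    (hsymm : ∀ x y, w x y = w y x) (hnonneg : ∀ x y, 0 ≤ w x y)
    (hmu : ∀ x, 0 < mu x)
    (hconn : ∀ x y : V, Relation.ReflTransGen (fun a b => 0 < w a b) x y)
    (N : ℕ) (hN : 0 < N) :
    ∃ C : ℝ, 0 < C ∧ ∀ (v0 : V → ℝ) (lam : ℝ) (v : V → ℝ), 0 < lam →
      (∀ x, v0 x + v x < 0) →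
      (∀ x, (mu x)⁻¹ * ∑ y, w x y * (v y - v x) =
        lam * Real.exp (v0 x + v x) * (Real.exp (v0 x + v x) - 1) +
          4 * π * N / (∑ z, mu z)) →
      Real.sqrt (∑ x, mu x * ((2 * mu x)⁻¹ *
          ∑ y, w x y * ((fun z => v z - (∑ s, mu s * v s) / (∑ s, mu s)) y -
            (fun z => v z - (∑ s, mu s * v s) / (∑ s, mu s)) x) ^ 2)) ≤ C * lam := by
  by_cases hE : IsEmpty V
  · refine ⟨1, one_pos, fun v0 lam v hlam _ _ => ?_⟩
    simp [Finset.univ_eq_empty]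
    positivity
  have : Nonempty V := not_isEmpty_iff.mp hE
  set M : ℝ := ∑ z, mu z with hM
  have hMpos : 0 < M := Finset.sum_pos (fun i _ => hmu i) Finset.univ_nonempty
  choose K hK0 hK using fun x y : V => pairK w hnonneg (hconn x y)
  set K0 : ℝ := ∑ x : V, ∑ y : V, K x y with hK0def
  have hK0nn : 0 ≤ K0 :=
    Finset.sum_nonneg fun x _ => Finset.sum_nonneg fun y _ => hK0 x y
  have hKle : ∀ x y : V, K x y ≤ K0 := by
    intro x y
    have h1 : K x y ≤ ∑ b : V, K x b :=
      Finset.single_le_sum (fun b _ => hK0 x b) (Finset.mem_univ y)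
    refine h1.trans ?_
    exact Finset.single_le_sum
      (f := fun a => ∑ b : V, K a b)
      (fun a _ => Finset.sum_nonneg fun b _ => hK0 a b) (Finset.mem_univ x)
  refine ⟨2 * M * K0 + 1, by positivity, fun v0 lam v hlam hneg heq => ?_⟩
  set vbar : ℝ := (∑ s, mu s * v s) / (∑ s, mu s) with hvbar
  set f : V → ℝ := fun z => v z - vbar with hf
  set D : ℝ := ∑ a, ∑ b, w a b * (f b - f a) ^ 2 with hD
  have hDnn : 0 ≤ D :=
    Finset.sum_nonneg fun a _ => Finset.sum_nonneg fun b _ =>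
      mul_nonneg (hnonneg a b) (sq_nonneg _)
  have hfv : ∀ a b : V, f b - f a = v b - v a := by
    intro a b; simp only [hf]; ring
  -- zero mean
  have hmean : ∑ x, mu x * f x = 0 := by
    have : ∑ x, mu x * f x = (∑ x, mu x * v x) - vbar * M := by
      simp only [hf, mul_sub]
      rw [Finset.sum_sub_distrib, ← Finset.sum_mul, mul_comm]
    rw [this, hvbar, ← hM]
    field_simp
    ring
  -- summation by parts
  set g : V → V → ℝ := fun a b => w a b * (v b - v a) with hg
  have hganti : ∀ a b : V, g b a = - g a b := by
    intro a b; simp only [hg, hsymm b a]; ring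
  have hterm : ∀ a b : V, w a b * (f b - f a) ^ 2 = g a b * f b - g a b * f a := by
    intro a b
    have e : v b - v a = f b - f a := (hfv a b).symm
    simp only [hg]
    rw [e]; ring
  set S2 : ℝ := ∑ a, ∑ b, g a b * f a with hS2
  have hDid : D = -2 * S2 := by
    have hsplit : D = (∑ a, ∑ b, g a b * f b) - S2 := by
      rw [hD, hS2, ← Finset.sum_sub_distrib]
      refine Finset.sum_congr rfl fun a _ => ?_
      rw [← Finset.sum_sub_distrib]
      exact Finset.sum_congr rfl fun b _ => hterm a b
    have hS1 : (∑ a, ∑ b, g a b * f b) = - S2 := by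
      rw [Finset.sum_comm]
      rw [hS2, ← Finset.sum_neg_distrib]
      refine Finset.sum_congr rfl fun b _ => ?_
      rw [← Finset.sum_neg_distrib]
      refine Finset.sum_congr rfl fun a _ => ?_
      rw [hganti b a]; ring
    rw [hsplit, hS1]; ring
  -- use the equation
  set c : ℝ := 4 * π * N / M with hc
  set Ee : V → ℝ := fun x => Real.exp (v0 x + v x) * (Real.exp (v0 x + v x) - 1)
    with hEe
  have hflux : ∀ x : V, ∑ y, w x y * (v y - v x) = mu x * (lam * Ee x + c) := by
    intro x
    have h1 := heq x
    have hmux := (hmu x).ne'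
    have h2 : ∑ y, w x y * (v y - v x) =
        mu x * ((mu x)⁻¹ * ∑ y, w x y * (v y - v x)) := by
      field_simp
    rw [h2, h1, hEe, hc, hM]
    ring
  set T : ℝ := ∑ x, mu x * f x * Ee x with hT
  have hS2T : S2 = lam * T := by
    rw [hS2, hT]
    have h1 : ∀ a : V, ∑ b, g a b * f a = f a * (mu a * (lam * Ee a + c)) := by
      intro a
      rw [← hflux a, Finset.mul_sum]
      refine Finset.sum_congr rfl fun b _ => ?_
      simp only [hg]; ring
    calc ∑ a, ∑ b, g a b * f a
        = ∑ a, (lam * (mu a * f a * Ee a) + c * (mu a * f a)) := by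
          refine Finset.sum_congr rfl fun a _ => ?_
          rw [h1 a]; ring
      _ = lam * ∑ a, mu a * f a * Ee a + c * ∑ a, mu a * f a := by
          rw [Finset.sum_add_distrib, Finset.mul_sum, Finset.mul_sum]
      _ = lam * ∑ a, mu a * f a * Ee a := by rw [hmean]; ring
  -- pointwise bound on f
  have hfb : ∀ x : V, |f x| ≤ K0 * Real.sqrt D := by
    intro x
    have hsq : 0 ≤ Real.sqrt D := Real.sqrt_nonneg D
    rcases le_or_gt (f x) 0 with hx | hx
    · obtain ⟨y, hy⟩ : ∃ y : V, 0 ≤ f y := by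
        by_contra hcon
        push_neg at hcon
        have hlt : ∑ z, mu z * f z < ∑ z : V, (0 : ℝ) :=
          Finset.sum_lt_sum_of_nonempty Finset.univ_nonempty
            (fun i _ => mul_neg_of_pos_of_neg (hmu i) (hcon i))
        simp [hmean] at hlt
      have h1 : |f x| ≤ |f x - f y| := by
        rw [abs_of_nonpos hx, abs_of_nonpos (by linarith)]
        linarith
      have h2 : |f x - f y| ≤ K y x * Real.sqrt D := hK y x f
      calc |f x| ≤ K y x * Real.sqrt D := h1.trans h2
        _ ≤ K0 * Real.sqrt D := mul_le_mul_of_nonneg_right (hKle y x) hsq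
    · obtain ⟨y, hy⟩ : ∃ y : V, f y ≤ 0 := by
        by_contra hcon
        push_neg at hcon
        have hlt : ∑ z : V, (0 : ℝ) < ∑ z, mu z * f z :=
          Finset.sum_lt_sum_of_nonempty Finset.univ_nonempty
            (fun i _ => mul_pos (hmu i) (hcon i))
        simp [hmean] at hlt
      have h1 : |f x| ≤ |f x - f y| := by
        rw [abs_of_pos hx, abs_of_nonneg (by linarith)]
        linarith
      have h2 : |f x - f y| ≤ K y x * Real.sqrt D := hK y x f
      calc |f x| ≤ K y x * Real.sqrt D := h1.trans h2
        _ ≤ K0 * Real.sqrt D := mul_le_mul_of_nonneg_right (hKle y x) hsq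
  -- bound on T
  have hTb : |T| ≤ M * (K0 * Real.sqrt D) := by
    have h1 : |T| ≤ ∑ x, |mu x * f x * Ee x| := Finset.abs_sum_le_sum_abs _ _
    have h2 : ∀ x : V, |mu x * f x * Ee x| ≤ mu x * (K0 * Real.sqrt D) := by
      intro x
      have he0 : 0 < Real.exp (v0 x + v x) := Real.exp_pos _
      have he1 : Real.exp (v0 x + v x) < 1 := Real.exp_lt_one_iff.mpr (hneg x)
      have hEb : |Ee x| ≤ 1 := by
        simp only [hEe]
        rw [abs_mul, abs_of_pos he0, abs_of_neg (by linarith)]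
        nlinarith
      calc |mu x * f x * Ee x| = mu x * |f x| * |Ee x| := by
            rw [abs_mul, abs_mul, abs_of_pos (hmu x)]
        _ ≤ mu x * (K0 * Real.sqrt D) * 1 := by
            apply mul_le_mul
            · exact mul_le_mul_of_nonneg_left (hfb x) (hmu x).le
            · exact hEb
            · exact abs_nonneg _
            · exact mul_nonneg (hmu x).le (mul_nonneg hK0nn (Real.sqrt_nonneg _))
        _ = mu x * (K0 * Real.sqrt D) := by ring
    calc |T| ≤ ∑ x, |mu x * f x * Ee x| := h1
      _ ≤ ∑ x, mu x * (K0 * Real.sqrt D) :=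
          Finset.sum_le_sum fun x _ => h2 x
      _ = M * (K0 * Real.sqrt D) := by rw [← Finset.sum_mul, ← hM]
  -- main chain
  have hDle : D ≤ 2 * lam * (M * (K0 * Real.sqrt D)) := by
    have : D = -2 * (lam * T) := by rw [hDid, hS2T]
    have habs : -2 * (lam * T) ≤ 2 * lam * |T| := by
      have := abs_nonneg T
      have h1 : -T ≤ |T| := neg_le_abs T
      nlinarith
    calc D = -2 * (lam * T) := this
      _ ≤ 2 * lam * |T| := habs
      _ ≤ 2 * lam * (M * (K0 * Real.sqrt D)) := by
          apply mul_le_mul_of_nonneg_left hTb (by positivity)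
  -- identify the goal quantity with sqrt (D/2)
  have hgoal : (∑ x, mu x * ((2 * mu x)⁻¹ * ∑ y, w x y * (f y - f x) ^ 2)) = D / 2 := by
    have h1 : ∀ x : V, mu x * ((2 * mu x)⁻¹ * ∑ y, w x y * (f y - f x) ^ 2)
        = (∑ y, w x y * (f y - f x) ^ 2) / 2 := by
      intro x
      have hmux := (hmu x).ne'
      field_simp
    rw [Finset.sum_congr rfl fun x _ => h1 x, ← Finset.sum_div, hD]
  rw [hgoal]
  -- conclude
  have hsD := Real.sqrt_nonneg D
  have hsq : Real.sqrt D ^ 2 = D := Real.sq_sqrt hDnn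
  have hfinal : Real.sqrt D ≤ 2 * M * K0 * lam := by
    rcases eq_or_lt_of_le hsD with h0 | h0
    · rw [← h0]
      have : (0:ℝ) ≤ 2 * M * K0 :=
        mul_nonneg (mul_nonneg (by norm_num) hMpos.le) hK0nn
      nlinarith
    · have : Real.sqrt D * Real.sqrt D ≤ (2 * M * K0 * lam) * Real.sqrt D := by
        nlinarith
      exact le_of_mul_le_mul_right this h0
  calc Real.sqrt (D / 2) ≤ Real.sqrt D := Real.sqrt_le_sqrt (by linarith)
    _ ≤ 2 * M * K0 * lam := hfinal
    _ ≤ (2 * M * K0 + 1) * lam := by nlinarith
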